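/- Let $d \geq 1$ be an integer and $\sigma^2 > 0$. Define the classical integrated density of states of a Gaussian random potential with single-site variance $C(0) = \sigma^2$ by $N_c(E) := \frac{1}{\Gamma(1+d/2)}\,(2\pi)^{-d/2}\,(2\pi\sigma^2)^{-1/2}\int_{\mathbb{R}} \big((E-v)_+\big)^{d/2}\, e^{-v^2/(2\sigma^2)}\,dv$ for $E \in \mathbb{R}$. Then $N_c(E) > 0$ for every $E$, and the leading low-energy fall-off is Gaussian: $\lim_{E \to -\infty} \frac{\log N_c(E)}{E^2} = -\frac{1}{2\sigma^2}$, i.e. $\log N_c(E) \sim -E^2/(2 C(0))$ as $E \to -\infty$. (This is the classical content of the Lifshits tail of the integrated density of states for Gaussian random potentials, for which $\log N(E) \sim \log N_c(E)$ as $E \to -\infty$.) -/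

import Mathlib

open MeasureTheory Real Filter

private lemma lifshits_amgm (p s t : ℝ) (hs : 0 < s) : p * t ≤ p ^ 2 * s + t ^ 2 / (4 * s) := by
  have h : (t - 2 * p * s) ^ 2 / (4 * s) = p ^ 2 * s + t ^ 2 / (4 * s) - p * t := by
    field_simp
    ring
  nlinarith [div_nonneg (sq_nonneg (t - 2 * p * s)) (by positivity : (0:ℝ) ≤ 4 * s)]

private lemma lifshits_rpow_le_exp (p x : ℝ) (hp : 0 < p) (hx : 0 ≤ x) :
    x ^ p ≤ Real.exp (p * x) := by
  calc x ^ p ≤ (Real.exp x) ^ p :=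
        Real.rpow_le_rpow hx (by linarith [Real.add_one_le_exp x]) hp.le
    _ = Real.exp (x * p) := (Real.exp_mul x p).symm
    _ = Real.exp (p * x) := by rw [mul_comm]

private lemma lifshits_integrable (p s E : ℝ) (hp : 0 < p) (hs : 0 < s) :
    Integrable (fun v : ℝ => (max (E - v) 0) ^ p * Real.exp (-v ^ 2 / (2 * s))) := by
  have hcont : Continuous fun v : ℝ => (max (E - v) 0) ^ p * Real.exp (-v ^ 2 / (2 * s)) := by
    apply Continuous.mul
    · exact ((continuous_const.sub continuous_id).max continuous_const).rpow_const
        (fun x => Or.inr hp.le)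
    · exact Real.continuous_exp.comp (by continuity)
  apply Integrable.mono'
    (g := fun v => Real.exp (p * |E| + p ^ 2 * s) * Real.exp (-(1 / (4 * s)) * v ^ 2))
  · exact (integrable_exp_neg_mul_sq (by positivity)).const_mul _
  · exact hcont.aestronglyMeasurable
  · refine Filter.Eventually.of_forall fun v => ?_
    rw [Real.norm_eq_abs, abs_of_nonneg (by positivity)]
    have h1 : (max (E - v) 0) ^ p ≤ Real.exp (p * (|E| + |v|)) := by
      calc (max (E - v) 0) ^ p ≤ (|E| + |v|) ^ p := by
            apply Real.rpow_le_rpow (le_max_right _ _) _ hp.le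
            exact max_le (by linarith [le_abs_self E, neg_abs_le v]) (by positivity)
        _ ≤ Real.exp (p * (|E| + |v|)) := lifshits_rpow_le_exp p _ hp (by positivity)
    calc (max (E - v) 0) ^ p * Real.exp (-v ^ 2 / (2 * s))
        ≤ Real.exp (p * (|E| + |v|)) * Real.exp (-v ^ 2 / (2 * s)) := by
          apply mul_le_mul_of_nonneg_right h1 (Real.exp_pos _).le
      _ ≤ Real.exp (p * |E| + p ^ 2 * s) * Real.exp (-(1 / (4 * s)) * v ^ 2) := by
          rw [← Real.exp_add, ← Real.exp_add]
          apply Real.exp_le_exp.mpr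
          have hd : v ^ 2 / (2 * s) = v ^ 2 / (4 * s) + v ^ 2 / (4 * s) := by
            field_simp; ring
          have hkey := lifshits_amgm p s |v| hs
          rw [sq_abs] at hkey
          have hc : -(1 / (4 * s)) * v ^ 2 = -(v ^ 2 / (4 * s)) := by ring
          have hnd : -v ^ 2 / (2 * s) = -(v ^ 2 / (2 * s)) := neg_div _ _
          rw [hc, hnd, hd]
          linarith [hkey]

private lemma lifshits_lower (p s E : ℝ) (hp : 0 < p) (hs : 0 < s) :
    Real.exp (-(|E| + 2) ^ 2 / (2 * s)) ≤
      ∫ v : ℝ, (max (E - v) 0) ^ p * Real.exp (-v ^ 2 / (2 * s)) := by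
  have hInt := lifshits_integrable p s E hp hs
  have h1 : (∫ v in Set.Icc (E - 2) (E - 1),
      (max (E - v) 0) ^ p * Real.exp (-v ^ 2 / (2 * s))) ≤
      ∫ v : ℝ, (max (E - v) 0) ^ p * Real.exp (-v ^ 2 / (2 * s)) :=
    setIntegral_le_integral hInt (Filter.Eventually.of_forall fun v => by positivity)
  refine le_trans ?_ h1
  have h2 : Real.exp (-(|E| + 2) ^ 2 / (2 * s)) =
      ∫ _ in Set.Icc (E - 2) (E - 1), Real.exp (-(|E| + 2) ^ 2 / (2 * s)) := by
    rw [setIntegral_const, Real.volume_real_Icc, smul_eq_mul]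
    have : E - 1 - (E - 2) = 1 := by ring
    rw [this]
    norm_num
  rw [h2]
  apply setIntegral_mono_on
  · exact (integrableOn_const_iff).mpr (Or.inr measure_Icc_lt_top)
  · exact hInt.integrableOn
  · exact measurableSet_Icc
  · intro v hv
    obtain ⟨hv1, hv2⟩ := hv
    have hmax : (1:ℝ) ≤ max (E - v) 0 := le_trans (by linarith) (le_max_left _ _)
    have h3 : (1:ℝ) ≤ (max (E - v) 0) ^ p := Real.one_le_rpow hmax hp.le
    have h4 : Real.exp (-(|E| + 2) ^ 2 / (2 * s)) ≤ Real.exp (-v ^ 2 / (2 * s)) := by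
      apply Real.exp_le_exp.mpr
      rw [div_le_div_iff₀ (by positivity) (by positivity)]
      have hb1 : v ≤ |E| + 2 := by linarith [le_abs_self E]
      have hb2 : -(|E| + 2) ≤ v := by linarith [neg_abs_le E]
      nlinarith [sq_le_sq' hb2 hb1]
    calc Real.exp (-(|E| + 2) ^ 2 / (2 * s)) = 1 * Real.exp (-(|E| + 2) ^ 2 / (2 * s)) := by ring
      _ ≤ (max (E - v) 0) ^ p * Real.exp (-v ^ 2 / (2 * s)) :=
        mul_le_mul h3 h4 (Real.exp_pos _).le (by positivity)

private lemma lifshits_upper (p s E : ℝ) (hp : 0 < p) (hs : 0 < s) (hE : E ≤ 0) :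
    (∫ v : ℝ, (max (E - v) 0) ^ p * Real.exp (-v ^ 2 / (2 * s))) ≤
      (Real.exp (p ^ 2 * s) * Real.sqrt (π / (1 / (4 * s)))) * Real.exp (-E ^ 2 / (2 * s)) := by
  have hb : (0:ℝ) < 1 / (4 * s) := by positivity
  have hInt := lifshits_integrable p s E hp hs
  have hInt2 : Integrable (fun v : ℝ => Real.exp (-(1 / (4 * s)) * (E - v) ^ 2)) :=
    (integrable_exp_neg_mul_sq hb).comp_sub_left E
  have hpt : ∀ v : ℝ, (max (E - v) 0) ^ p * Real.exp (-v ^ 2 / (2 * s)) ≤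
      (Real.exp (p ^ 2 * s) * Real.exp (-E ^ 2 / (2 * s))) *
        Real.exp (-(1 / (4 * s)) * (E - v) ^ 2) := by
    intro v
    rcases le_or_gt (E - v) 0 with h | h
    · rw [max_eq_right h, Real.zero_rpow hp.ne', zero_mul]
      positivity
    · rw [max_eq_left h.le]
      set t := E - v with ht
      have hv : v = E - t := by rw [ht]; ring
      calc (E - v) ^ p * Real.exp (-v ^ 2 / (2 * s))
          ≤ Real.exp (p * t) * Real.exp (-v ^ 2 / (2 * s)) := by
            apply mul_le_mul_of_nonneg_right (lifshits_rpow_le_exp p t hp h.le)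
              (Real.exp_pos _).le
        _ ≤ (Real.exp (p ^ 2 * s) * Real.exp (-E ^ 2 / (2 * s))) *
              Real.exp (-(1 / (4 * s)) * (E - v) ^ 2) := by
            rw [← Real.exp_add, ← Real.exp_add, ← Real.exp_add]
            apply Real.exp_le_exp.mpr
            have hv2 : v ^ 2 = E ^ 2 - 2 * E * t + t ^ 2 := by rw [hv]; ring
            have hEt : E * t ≤ 0 := mul_nonpos_of_nonpos_of_nonneg hE h.le
            have hkey := lifshits_amgm p s t hs
            have hd2 : -(1 / (4 * s)) * (E - v) ^ 2 = -(t ^ 2 / (4 * s)) := by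
              rw [← ht]; field_simp
            have hEts : E * t / s ≤ 0 := div_nonpos_of_nonpos_of_nonneg hEt hs.le
            have hA : -(E ^ 2 - 2 * E * t + t ^ 2) / (2 * s) =
                -(E ^ 2 / (2 * s) - E * t / s + t ^ 2 / (4 * s) + t ^ 2 / (4 * s)) := by
              field_simp; ring
            have hB : -E ^ 2 / (2 * s) = -(E ^ 2 / (2 * s)) := neg_div _ _
            rw [hv2, hA, hB, hd2]
            linarith [hkey]
  calc (∫ v : ℝ, (max (E - v) 0) ^ p * Real.exp (-v ^ 2 / (2 * s)))
      ≤ ∫ v : ℝ, (Real.exp (p ^ 2 * s) * Real.exp (-E ^ 2 / (2 * s))) *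
          Real.exp (-(1 / (4 * s)) * (E - v) ^ 2) :=
        integral_mono hInt (hInt2.const_mul _) hpt
    _ = (Real.exp (p ^ 2 * s) * Real.exp (-E ^ 2 / (2 * s))) *
          ∫ v : ℝ, Real.exp (-(1 / (4 * s)) * (E - v) ^ 2) := integral_const_mul _ _
    _ = (Real.exp (p ^ 2 * s) * Real.exp (-E ^ 2 / (2 * s))) * Real.sqrt (π / (1 / (4 * s))) := by
        rw [integral_sub_left_eq_self (fun x : ℝ => Real.exp (-(1 / (4 * s)) * x ^ 2)) volume E,
          integral_gaussian]
    _ = (Real.exp (p ^ 2 * s) * Real.sqrt (π / (1 / (4 * s)))) * Real.exp (-E ^ 2 / (2 * s)) := by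
        ring

/-- Gaussian Lifshits tail (classical content): for the classical integrated density of
states `N_c` of a Gaussian random potential with single-site variance `σ2 = C(0) > 0`,
one has `N_c(E) > 0` for every `E` and `log N_c(E) / E² → -1/(2 C(0))` as `E → -∞`,
i.e. `log N_c(E) ~ -E²/(2C(0))`. -/
theorem gaussian_classical_lifshits_tail (d : ℕ) (hd : 1 ≤ d) (σ2 : ℝ) (hσ : 0 < σ2)
    (Nc : ℝ → ℝ)
    (hNc : ∀ E : ℝ, Nc E =
      (Real.Gamma (1 + (d : ℝ) / 2))⁻¹ * (2 * Real.pi) ^ (-(d : ℝ) / 2) *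
        (2 * Real.pi * σ2) ^ (-(1 : ℝ) / 2) *
        ∫ v : ℝ, (max (E - v) 0) ^ ((d : ℝ) / 2) * Real.exp (-v ^ 2 / (2 * σ2))) :
    (∀ E : ℝ, 0 < Nc E) ∧
    Tendsto (fun E : ℝ => Real.log (Nc E) / E ^ 2) atBot (nhds (-(1 / (2 * σ2)))) := by
  set p : ℝ := (d : ℝ) / 2 with hpdef
  have hd1 : (1:ℝ) ≤ (d : ℝ) := by exact_mod_cast hd
  have hp : 0 < p := by rw [hpdef]; linarith
  set c : ℝ := (Real.Gamma (1 + (d : ℝ) / 2))⁻¹ * (2 * Real.pi) ^ (-(d : ℝ) / 2) *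
      (2 * Real.pi * σ2) ^ (-(1 : ℝ) / 2) with hcdef
  have hc : 0 < c := by
    have hΓ : 0 < Real.Gamma (1 + (d : ℝ) / 2) := Real.Gamma_pos_of_pos (by linarith)
    have h2π : (0:ℝ) < 2 * Real.pi := by positivity
    have h2πσ : (0:ℝ) < 2 * Real.pi * σ2 := by positivity
    exact mul_pos (mul_pos (inv_pos.mpr hΓ) (Real.rpow_pos_of_pos h2π _))
      (Real.rpow_pos_of_pos h2πσ _)
  set I : ℝ → ℝ := fun E => ∫ v : ℝ, (max (E - v) 0) ^ p * Real.exp (-v ^ 2 / (2 * σ2))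
    with hIdef
  have hNc' : ∀ E, Nc E = c * I E := fun E => hNc E
  have hIlow : ∀ E, Real.exp (-(|E| + 2) ^ 2 / (2 * σ2)) ≤ I E :=
    fun E => lifshits_lower p σ2 E hp hσ
  have hIpos : ∀ E, 0 < I E := fun E => lt_of_lt_of_le (Real.exp_pos _) (hIlow E)
  have hNcpos : ∀ E, 0 < Nc E := by
    intro E; rw [hNc' E]; exact mul_pos hc (hIpos E)
  refine ⟨hNcpos, ?_⟩
  set K : ℝ := Real.exp (p ^ 2 * σ2) * Real.sqrt (π / (1 / (4 * σ2))) with hKdef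
  have hK : 0 < K := by
    apply mul_pos (Real.exp_pos _)
    exact Real.sqrt_pos.mpr (by positivity)
  have hIup : ∀ E ≤ (0:ℝ), I E ≤ K * Real.exp (-E ^ 2 / (2 * σ2)) :=
    fun E hE => lifshits_upper p σ2 E hp hσ hE
  have hlog : ∀ E, Real.log (Nc E) = Real.log c + Real.log (I E) := by
    intro E; rw [hNc' E, Real.log_mul hc.ne' (hIpos E).ne']
  -- limits of the bounding functions
  have hinv2 : Tendsto (fun E : ℝ => (E ^ 2)⁻¹) atBot (nhds 0) := by
    have h : Tendsto (fun E : ℝ => E ^ 2) atBot atTop := by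
      have h2 := (tendsto_pow_atTop (n := 2) (by norm_num)).comp
        (tendsto_neg_atBot_atTop (G := ℝ))
      have he : ((fun x : ℝ => x ^ 2) ∘ Neg.neg) = fun E : ℝ => E ^ 2 := by
        funext E; simp [Function.comp]
      rwa [he] at h2
    exact h.inv_tendsto_atTop
  have hinv1 : Tendsto (fun E : ℝ => E⁻¹) atBot (nhds 0) := by
    have h := (tendsto_neg_atBot_atTop (G := ℝ)).inv_tendsto_atTop
    have h2 : Tendsto (fun E : ℝ => -(-E)⁻¹) atBot (nhds (-0)) := h.neg
    have he : (fun E : ℝ => -(-E)⁻¹) = fun E : ℝ => E⁻¹ := by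
      funext E; rw [inv_neg, neg_neg]
    rw [he, neg_zero] at h2; exact h2
  have hLB : Tendsto (fun E : ℝ => (Real.log c + -(2 - E) ^ 2 / (2 * σ2)) / E ^ 2)
      atBot (nhds (-(1 / (2 * σ2)))) := by
    have hnice : Tendsto (fun E : ℝ =>
        (Real.log c - 2 / σ2) * (E ^ 2)⁻¹ + (2 / σ2) * E⁻¹ + -(1 / (2 * σ2)))
        atBot (nhds ((Real.log c - 2 / σ2) * 0 + (2 / σ2) * 0 + -(1 / (2 * σ2)))) :=
      (((hinv2.const_mul _).add (hinv1.const_mul _)).add tendsto_const_nhds)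
    simp only [mul_zero, zero_add] at hnice
    apply hnice.congr'
    filter_upwards [eventually_le_atBot (-1 : ℝ)] with E hE
    have hE0 : E ≠ 0 := by intro h; rw [h] at hE; norm_num at hE
    field_simp
    ring
  have hUB : Tendsto (fun E : ℝ => (Real.log c + (Real.log K + -E ^ 2 / (2 * σ2))) / E ^ 2)
      atBot (nhds (-(1 / (2 * σ2)))) := by
    have hnice : Tendsto (fun E : ℝ =>
        (Real.log c + Real.log K) * (E ^ 2)⁻¹ + -(1 / (2 * σ2)))
        atBot (nhds ((Real.log c + Real.log K) * 0 + -(1 / (2 * σ2)))) :=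
      (hinv2.const_mul _).add tendsto_const_nhds
    simp only [mul_zero, zero_add] at hnice
    apply hnice.congr'
    filter_upwards [eventually_le_atBot (-1 : ℝ)] with E hE
    have hE0 : E ≠ 0 := by intro h; rw [h] at hE; norm_num at hE
    field_simp
    ring
  apply tendsto_of_tendsto_of_tendsto_of_le_of_le' hLB hUB
  · filter_upwards [eventually_le_atBot (-1 : ℝ)] with E hE
    have hE2 : (0:ℝ) < E ^ 2 := by nlinarith [sq_nonneg (E + 1)]
    rw [hlog E]
    gcongr
    apply (Real.le_log_iff_exp_le (hIpos E)).mpr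
    have h := hIlow E
    rw [abs_of_nonpos (by linarith : E ≤ 0)] at h
    have h2 : (-E + 2 : ℝ) ^ 2 = (2 - E) ^ 2 := by ring
    rw [h2] at h
    exact h
  · filter_upwards [eventually_le_atBot (-1 : ℝ)] with E hE
    have hE2 : (0:ℝ) < E ^ 2 := by nlinarith [sq_nonneg (E + 1)]
    rw [hlog E]
    gcongr
    have h := hIup E (by linarith)
    calc Real.log (I E) ≤ Real.log (K * Real.exp (-E ^ 2 / (2 * σ2))) :=
          Real.log_le_log (hIpos E) h
      _ = Real.log K + -E ^ 2 / (2 * σ2) := by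
          rw [Real.log_mul hK.ne' (Real.exp_pos _).ne', Real.log_exp]
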